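/- Suppose s ≤ d. If γ1 < 0, then the zero solution is stable: for every ε ∈ (0,d0] there exist δ > 0 and t1 ≥ t0 such that every admissible solution with v(t1) ≤ δ satisfies v(t) ≤ ε for all t ≥ t1. If γ1 > 0 and m ≤ q, then the zero solution is unstable: there exist ε > 0 and t1 ≥ t0 such that for every δ ∈ (0,ε), every admissible solution with v(t1) = δ satisfies v(t) ≥ ε for some t ≥ t1. -/

import Mathlib

/-- An admissible solution of the reduced equation
`v'(t) = γ1·t^{−m/q}·v(t)^s + γ2·t^{−n/q}·v(t)^d + ρ(t)` on `[t0,∞)` with values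
in `[0,d0]`, where
`|ρ(t)| ≤ M·(t^{−m/q}·v(t)^s + t^{−n/q}·v(t)^d)·(v(t) + t^{−1/q})`. -/
def IsAdmissible2 (q m n s d : ℕ) (γ1 γ2 d0 t0 M : ℝ) (v : ℝ → ℝ) : Prop :=
  (∀ t ≥ t0, v t ∈ Set.Icc (0:ℝ) d0) ∧
  ∃ ρ : ℝ → ℝ,
    (∀ t ≥ t0, |ρ t| ≤
      M * (t ^ (-(m:ℝ)/(q:ℝ)) * v t ^ s + t ^ (-(n:ℝ)/(q:ℝ)) * v t ^ d)
        * (v t + t ^ (-(1:ℝ)/(q:ℝ)))) ∧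
    (∀ t ≥ t0, HasDerivAt v
      (γ1 * t ^ (-(m:ℝ)/(q:ℝ)) * v t ^ s + γ2 * t ^ (-(n:ℝ)/(q:ℝ)) * v t ^ d + ρ t) t)

section Helpers
open Filter Real Set

lemma barrier_le' (v f : ℝ → ℝ) (t1 a : ℝ)
    (hderiv : ∀ t ≥ t1, HasDerivAt v (f t) t)
    (hneg : ∀ t ≥ t1, v t = a → f t < 0)
    (h1 : v t1 ≤ a) : ∀ t ≥ t1, v t ≤ a := by
  intro t2 ht2
  by_contra hcon
  push_neg at hcon
  have hcont : ∀ t ≥ t1, ContinuousAt v t := fun t ht => (hderiv t ht).continuousAt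
  set S : Set ℝ := {t | t ∈ Icc t1 t2 ∧ v t ≤ a} with hS
  have hne : S.Nonempty := ⟨t1, ⟨le_refl _, ht2⟩, h1⟩
  have hbdd : BddAbove S := ⟨t2, fun x hx => hx.1.2⟩
  set τ := sSup S with hτdef
  have hτ1 : t1 ≤ τ := le_csSup hbdd ⟨⟨le_refl _, ht2⟩, h1⟩
  have hτ2 : τ ≤ t2 := csSup_le hne (fun x hx => hx.1.2)
  have hτcl : τ ∈ closure S := csSup_mem_closure hne hbdd
  have hvτ : v τ ≤ a := by
    haveI hne' : (nhdsWithin τ S).NeBot := mem_closure_iff_nhdsWithin_neBot.1 hτcl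
    exact le_of_tendsto ((hcont τ hτ1).continuousWithinAt)
      (eventually_nhdsWithin_of_forall (s := S) (fun x hx => hx.2))
  have hgt : ∀ t, τ < t → t ≤ t2 → a < v t := by
    intro t ht ht2'
    by_contra h
    push_neg at h
    exact absurd (le_csSup hbdd ⟨⟨hτ1.trans ht.le, ht2'⟩, h⟩) (not_le.2 ht)
  have hττ2 : τ < t2 := lt_of_le_of_ne hτ2 (fun h => absurd (h ▸ hvτ) (not_le.2 hcon))
  have hvτa : v τ = a := by
    refine le_antisymm hvτ ?_
    have hev : ∀ᶠ t in nhdsWithin τ (Ioi τ), a ≤ v t := by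
      filter_upwards [mem_nhdsWithin_of_mem_nhds (Iio_mem_nhds hττ2),
        self_mem_nhdsWithin] with t h1' h2'
      exact (hgt t h2' (le_of_lt h1')).le
    exact ge_of_tendsto ((hcont τ hτ1).continuousWithinAt) hev
  have hd : HasDerivWithinAt v (f τ) (Ioi τ) τ := (hderiv τ hτ1).hasDerivWithinAt
  have hslope := hasDerivWithinAt_iff_tendsto_slope.1 hd
  have hIoi : (Ioi τ) \ {τ} = Ioi τ := by
    ext x; simp only [mem_diff, mem_Ioi, mem_singleton_iff]
    exact ⟨fun h => h.1, fun h => ⟨h, ne_of_gt h⟩⟩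
  rw [hIoi] at hslope
  have hf0 : 0 ≤ f τ := by
    refine ge_of_tendsto hslope ?_
    filter_upwards [mem_nhdsWithin_of_mem_nhds (Iio_mem_nhds hττ2),
      self_mem_nhdsWithin] with t hlt hgt'
    rw [slope_def_field]
    have hvt : a < v t := hgt t hgt' (le_of_lt hlt)
    have h0 : 0 ≤ v t - v τ := by rw [hvτa]; linarith
    exact div_nonneg h0 (by simp only [mem_Ioi] at hgt'; linarith)
  exact absurd (hneg τ hτ1 hvτa) (not_lt.2 hf0)

lemma barrier_ge' (v f : ℝ → ℝ) (t1 a : ℝ)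
    (hderiv : ∀ t ≥ t1, HasDerivAt v (f t) t)
    (hpos : ∀ t ≥ t1, v t = a → 0 < f t)
    (h1 : a ≤ v t1) : ∀ t ≥ t1, a ≤ v t := by
  have := barrier_le' (fun t => -v t) (fun t => -f t) t1 (-a)
    (fun t ht => (hderiv t ht).neg)
    (fun t ht hv => by
      have hva : v t = a := by linarith
      linarith [hpos t ht hva])
    (by linarith)
  intro t ht
  have := this t ht
  simpa using this


lemma rho_bound' (q m n s d : ℕ) (M : ℝ) (hM : 0 < M) (hsd : s ≤ d)
    (t u η ρt : ℝ) (ht : 1 ≤ t) (hu0 : 0 ≤ u) (huη : u ≤ η) (hη1 : η ≤ 1) (hη0 : 0 ≤ η)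
    (hA : t ^ (-(((n:ℝ)-(m:ℝ))/(q:ℝ))) ≤ η) (hB : t ^ (-(1:ℝ)/(q:ℝ)) ≤ η)
    (hρ : |ρt| ≤ M * (t ^ (-(m:ℝ)/(q:ℝ)) * u ^ s + t ^ (-(n:ℝ)/(q:ℝ)) * u ^ d)
        * (u + t ^ (-(1:ℝ)/(q:ℝ)))) (γ1 γ2 : ℝ) :
    γ1 * t ^ (-(m:ℝ)/(q:ℝ)) * u ^ s + γ2 * t ^ (-(n:ℝ)/(q:ℝ)) * u ^ d + ρt
      ≤ γ1 * (t ^ (-(m:ℝ)/(q:ℝ)) * u ^ s)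
        + (|γ2| + 4*M) * (η * (t ^ (-(m:ℝ)/(q:ℝ)) * u ^ s)) ∧
    γ1 * (t ^ (-(m:ℝ)/(q:ℝ)) * u ^ s)
        - (|γ2| + 4*M) * (η * (t ^ (-(m:ℝ)/(q:ℝ)) * u ^ s))
      ≤ γ1 * t ^ (-(m:ℝ)/(q:ℝ)) * u ^ s + γ2 * t ^ (-(n:ℝ)/(q:ℝ)) * u ^ d + ρt := by
  have ht0 : (0:ℝ) < t := lt_of_lt_of_le one_pos ht
  have hP : (0:ℝ) < t ^ (-(m:ℝ)/(q:ℝ)) := rpow_pos_of_pos ht0 _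
  have hQ : (0:ℝ) < t ^ (-(n:ℝ)/(q:ℝ)) := rpow_pos_of_pos ht0 _
  have hR : (0:ℝ) < t ^ (-(1:ℝ)/(q:ℝ)) := rpow_pos_of_pos ht0 _
  have hQsplit : t ^ (-(n:ℝ)/(q:ℝ))
      = t ^ (-(m:ℝ)/(q:ℝ)) * t ^ (-(((n:ℝ)-(m:ℝ))/(q:ℝ))) := by
    rw [← Real.rpow_add ht0]; congr 1; ring
  have hud : u ^ d ≤ u ^ s := pow_le_pow_of_le_one hu0 (le_trans huη hη1) hsd
  have hXnn : (0:ℝ) ≤ t ^ (-(m:ℝ)/(q:ℝ)) * u ^ s :=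
    mul_nonneg hP.le (pow_nonneg hu0 _)
  have hYnn : (0:ℝ) ≤ t ^ (-(n:ℝ)/(q:ℝ)) * u ^ d :=
    mul_nonneg hQ.le (pow_nonneg hu0 _)
  have hY : t ^ (-(n:ℝ)/(q:ℝ)) * u ^ d ≤ η * (t ^ (-(m:ℝ)/(q:ℝ)) * u ^ s) := by
    calc t ^ (-(n:ℝ)/(q:ℝ)) * u ^ d
        = t ^ (-(m:ℝ)/(q:ℝ)) * (t ^ (-(((n:ℝ)-(m:ℝ))/(q:ℝ))) * u ^ d) := by
          rw [hQsplit]; ring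
      _ ≤ t ^ (-(m:ℝ)/(q:ℝ)) * (η * u ^ s) := by
          refine mul_le_mul_of_nonneg_left ?_ hP.le
          exact mul_le_mul hA hud (pow_nonneg hu0 _) hη0
      _ = η * (t ^ (-(m:ℝ)/(q:ℝ)) * u ^ s) := by ring
  have hηX : η * (t ^ (-(m:ℝ)/(q:ℝ)) * u ^ s) ≤ t ^ (-(m:ℝ)/(q:ℝ)) * u ^ s :=
    mul_le_of_le_one_left hXnn hη1
  have hprod : (t ^ (-(m:ℝ)/(q:ℝ)) * u ^ s + t ^ (-(n:ℝ)/(q:ℝ)) * u ^ d)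
      * (u + t ^ (-(1:ℝ)/(q:ℝ)))
      ≤ (2 * (t ^ (-(m:ℝ)/(q:ℝ)) * u ^ s)) * (2 * η) := by
    refine mul_le_mul (by linarith) (by linarith) (by positivity) (by linarith)
  have hρ2 : |ρt| ≤ 4 * M * (η * (t ^ (-(m:ℝ)/(q:ℝ)) * u ^ s)) := by
    calc |ρt| ≤ M * (t ^ (-(m:ℝ)/(q:ℝ)) * u ^ s + t ^ (-(n:ℝ)/(q:ℝ)) * u ^ d)
        * (u + t ^ (-(1:ℝ)/(q:ℝ))) := hρ
      _ = M * ((t ^ (-(m:ℝ)/(q:ℝ)) * u ^ s + t ^ (-(n:ℝ)/(q:ℝ)) * u ^ d)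
          * (u + t ^ (-(1:ℝ)/(q:ℝ)))) := by ring
      _ ≤ M * ((2 * (t ^ (-(m:ℝ)/(q:ℝ)) * u ^ s)) * (2 * η)) :=
          mul_le_mul_of_nonneg_left hprod hM.le
      _ = 4 * M * (η * (t ^ (-(m:ℝ)/(q:ℝ)) * u ^ s)) := by ring
  have hγ2Y : |γ2 * (t ^ (-(n:ℝ)/(q:ℝ)) * u ^ d)|
      ≤ |γ2| * (η * (t ^ (-(m:ℝ)/(q:ℝ)) * u ^ s)) := by
    rw [abs_mul, abs_of_nonneg hYnn]
    exact mul_le_mul_of_nonneg_left hY (abs_nonneg _)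
  obtain ⟨hγ2l, hγ2u⟩ := abs_le.1 hγ2Y
  obtain ⟨hρl, hρu⟩ := abs_le.1 hρ2
  constructor <;> nlinarith [abs_nonneg γ2, hXnn]

end Helpers

open Filter Real Set

/-- the fully nonlinear case with `s ≤ d`: stability when
`γ1 < 0`, instability when `γ1 > 0` and `m ≤ q`. -/
theorem stability_instability_s_le_d
    (q m n s d : ℕ) (hq : 0 < q) (hm : 0 < m) (hmn : m < n)
    (hs : 2 ≤ s) (hd : 2 ≤ d) (hsd : s ≤ d)
    (γ1 γ2 d0 t0 M : ℝ) (hγ1 : γ1 ≠ 0) (hγ2 : γ2 ≠ 0)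
    (hd0 : 0 < d0) (ht0 : 0 < t0) (hM : 0 < M) :
    (γ1 < 0 →
      ∀ ε ∈ Set.Ioc (0:ℝ) d0, ∃ δ > 0, ∃ t1 ≥ t0,
        ∀ v : ℝ → ℝ, IsAdmissible2 q m n s d γ1 γ2 d0 t0 M v → v t1 ≤ δ →
          ∀ t ≥ t1, v t ≤ ε) ∧
    (0 < γ1 → m ≤ q →
      ∃ ε > 0, ∃ t1 ≥ t0, ∀ δ ∈ Set.Ioo (0:ℝ) ε,
        ∀ v : ℝ → ℝ, IsAdmissible2 q m n s d γ1 γ2 d0 t0 M v → v t1 = δ →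
          ∃ t ≥ t1, ε ≤ v t) := by
  have hC : (0:ℝ) < |γ2| + 4*M := by positivity
  have hqR : (0:ℝ) < (q:ℝ) := by exact_mod_cast hq
  have hnmR : (0:ℝ) < ((n:ℝ)-(m:ℝ))/(q:ℝ) := by
    apply div_pos _ hqR
    have : (m:ℝ) < (n:ℝ) := by exact_mod_cast hmn
    linarith
  have h1qR : (0:ℝ) < (1:ℝ)/(q:ℝ) := by positivity
  -- a generic way to find T for a given η
  have getT : ∀ η : ℝ, 0 < η → ∃ T : ℝ, ∀ t ≥ T,
      t ^ (-(((n:ℝ)-(m:ℝ))/(q:ℝ))) ≤ η ∧ t ^ (-(1:ℝ)/(q:ℝ)) ≤ η := by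
    intro η hη
    have h1 : Tendsto (fun x : ℝ => x ^ (-(((n:ℝ)-(m:ℝ))/(q:ℝ)))) atTop (nhds 0) :=
      tendsto_rpow_neg_atTop hnmR
    have h2 : Tendsto (fun x : ℝ => x ^ (-(1:ℝ)/(q:ℝ))) atTop (nhds 0) := by
      have := tendsto_rpow_neg_atTop h1qR
      simpa [neg_div] using this
    have hev := (h1.eventually_lt_const hη).and (h2.eventually_lt_const hη)
    rw [eventually_atTop] at hev
    obtain ⟨T, hT⟩ := hev
    exact ⟨T, fun t ht => ⟨(hT t ht).1.le, (hT t ht).2.le⟩⟩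
  constructor
  · -- STABILITY
    intro hγ1neg ε hε
    obtain ⟨hε0, hεd0⟩ := hε
    set η := min 1 (min ε ((-γ1)/(2*(|γ2| + 4*M)))) with hηdef
    have hη0 : 0 < η := by
      refine lt_min one_pos (lt_min hε0 ?_)
      apply div_pos (by linarith) (by linarith)
    have hη1 : η ≤ 1 := min_le_left _ _
    have hηε : η ≤ ε := le_trans (min_le_right _ _) (min_le_left _ _)
    have hηγ : (|γ2| + 4*M) * η ≤ (-γ1)/2 := by
      have hle : η ≤ (-γ1)/(2*(|γ2| + 4*M)) :=
        le_trans (min_le_right _ _) (min_le_right _ _)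
      calc (|γ2| + 4*M) * η ≤ (|γ2| + 4*M) * ((-γ1)/(2*(|γ2| + 4*M))) :=
            mul_le_mul_of_nonneg_left hle hC.le
        _ = (-γ1)/2 := by field_simp
    obtain ⟨T, hT⟩ := getT η hη0
    set t1 := max t0 (max 1 T) with ht1def
    have ht1t0 : t0 ≤ t1 := le_max_left _ _
    have ht11 : (1:ℝ) ≤ t1 := le_trans (le_max_left _ _) (le_max_right _ _)
    have ht1T : T ≤ t1 := le_trans (le_max_right _ _) (le_max_right _ _)
    refine ⟨η, hη0, t1, ht1t0, ?_⟩
    rintro v ⟨hrange, ρ, hρ, hdv⟩ hv1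
    have key : ∀ t ≥ t1, v t ≤ η := by
      refine barrier_le' v
        (fun t => γ1 * t ^ (-(m:ℝ)/(q:ℝ)) * v t ^ s
          + γ2 * t ^ (-(n:ℝ)/(q:ℝ)) * v t ^ d + ρ t) t1 η
        (fun t ht => hdv t (le_trans ht1t0 ht)) ?_ hv1
      intro t ht hvt
      have htt0 : t0 ≤ t := le_trans ht1t0 ht
      have ht1' : (1:ℝ) ≤ t := le_trans ht11 ht
      have htpos : (0:ℝ) < t := by linarith
      obtain ⟨hTA, hTB⟩ := hT t (le_trans ht1T ht)
      have hb := (rho_bound' q m n s d M hM hsd t (v t) η (ρ t) ht1'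
        (hrange t htt0).1 (le_of_eq hvt) hη1 hη0.le hTA hTB (hρ t htt0) γ1 γ2).1
      have hX : (0:ℝ) < t ^ (-(m:ℝ)/(q:ℝ)) * v t ^ s := by
        have : (0:ℝ) < v t := hvt ▸ hη0
        positivity
      have h2 : (|γ2| + 4*M) * (η * (t ^ (-(m:ℝ)/(q:ℝ)) * v t ^ s))
          ≤ ((-γ1)/2) * (t ^ (-(m:ℝ)/(q:ℝ)) * v t ^ s) := by
        rw [← mul_assoc]
        exact mul_le_mul_of_nonneg_right hηγ hX.le
      have h3 := mul_neg_of_neg_of_pos (show γ1/2 < 0 by linarith) hX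
      linarith
    intro t ht
    exact le_trans (key t ht) hηε
  · -- INSTABILITY
    intro hγ1pos hmq
    set η := min 1 (γ1/(2*(|γ2| + 4*M))) with hηdef
    have hη0 : 0 < η := lt_min one_pos (div_pos hγ1pos (by linarith))
    have hη1 : η ≤ 1 := min_le_left _ _
    have hηγ : (|γ2| + 4*M) * η ≤ γ1/2 := by
      have hle : η ≤ γ1/(2*(|γ2| + 4*M)) := min_le_right _ _
      calc (|γ2| + 4*M) * η ≤ (|γ2| + 4*M) * (γ1/(2*(|γ2| + 4*M))) :=
            mul_le_mul_of_nonneg_left hle hC.le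
        _ = γ1/2 := by field_simp
    obtain ⟨T, hT⟩ := getT η hη0
    set t1 := max t0 (max 1 T) with ht1def
    have ht1t0 : t0 ≤ t1 := le_max_left _ _
    have ht11 : (1:ℝ) ≤ t1 := le_trans (le_max_left _ _) (le_max_right _ _)
    have ht1T : T ≤ t1 := le_trans (le_max_right _ _) (le_max_right _ _)
    refine ⟨η, hη0, t1, ht1t0, ?_⟩
    rintro δ ⟨hδ0, hδη⟩ v ⟨hrange, ρ, hρ, hdv⟩ hv1
    by_contra hcon
    push_neg at hcon
    -- v stays < η for all t ≥ t1
    have hlt : ∀ t ≥ t1, v t < η := hcon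
    -- lower bound estimate for the derivative whenever 0 < v t ≤ η
    have hfge : ∀ t ≥ t1, (γ1/2) * (t ^ (-(m:ℝ)/(q:ℝ)) * v t ^ s)
        ≤ γ1 * t ^ (-(m:ℝ)/(q:ℝ)) * v t ^ s
          + γ2 * t ^ (-(n:ℝ)/(q:ℝ)) * v t ^ d + ρ t := by
      intro t ht
      have htt0 : t0 ≤ t := le_trans ht1t0 ht
      have ht1' : (1:ℝ) ≤ t := le_trans ht11 ht
      obtain ⟨hTA, hTB⟩ := hT t (le_trans ht1T ht)
      have hb := (rho_bound' q m n s d M hM hsd t (v t) η (ρ t) ht1'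
        (hrange t htt0).1 (hlt t ht).le hη1 hη0.le hTA hTB (hρ t htt0) γ1 γ2).2
      have hX : (0:ℝ) ≤ t ^ (-(m:ℝ)/(q:ℝ)) * v t ^ s := by
        have h0 : (0:ℝ) ≤ v t := (hrange t htt0).1
        positivity
      have h2 : (|γ2| + 4*M) * (η * (t ^ (-(m:ℝ)/(q:ℝ)) * v t ^ s))
          ≤ (γ1/2) * (t ^ (-(m:ℝ)/(q:ℝ)) * v t ^ s) := by
        rw [← mul_assoc]
        exact mul_le_mul_of_nonneg_right hηγ hX
      linarith
    -- v stays ≥ δ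
    have hlow : ∀ t ≥ t1, δ ≤ v t := by
      refine barrier_ge' v
        (fun t => γ1 * t ^ (-(m:ℝ)/(q:ℝ)) * v t ^ s
          + γ2 * t ^ (-(n:ℝ)/(q:ℝ)) * v t ^ d + ρ t) t1 δ
        (fun t ht => hdv t (le_trans ht1t0 ht)) ?_ hv1.ge
      intro t ht hvt
      have ht1' : (1:ℝ) ≤ t := le_trans ht11 ht
      have htpos : (0:ℝ) < t := by linarith
      have hX : (0:ℝ) < t ^ (-(m:ℝ)/(q:ℝ)) * v t ^ s := by
        have : (0:ℝ) < v t := hvt ▸ hδ0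
        positivity
      have hfge' := hfge t ht
      have h3 := mul_pos (half_pos hγ1pos) hX
      linarith
    -- quantitative growth: derivative ≥ c / t with c = (γ1/2) * δ^s
    obtain ⟨c, hc0, hcdef⟩ : ∃ c : ℝ, 0 < c ∧ c = (γ1/2) * δ ^ s :=
      ⟨_, by positivity, rfl⟩
    have hgrow : ∀ t ≥ t1, c * t⁻¹
        ≤ γ1 * t ^ (-(m:ℝ)/(q:ℝ)) * v t ^ s
          + γ2 * t ^ (-(n:ℝ)/(q:ℝ)) * v t ^ d + ρ t := by
      intro t ht
      have ht1' : (1:ℝ) ≤ t := le_trans ht11 ht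
      have htpos : (0:ℝ) < t := by linarith
      have hm1 : t ^ (-1 : ℝ) ≤ t ^ (-(m:ℝ)/(q:ℝ)) := by
        apply rpow_le_rpow_of_exponent_le ht1'
        rw [neg_div, neg_le_neg_iff, div_le_one hqR]
        exact_mod_cast hmq
      have hinv : t⁻¹ ≤ t ^ (-(m:ℝ)/(q:ℝ)) := by
        rwa [Real.rpow_neg_one] at hm1
      have hvs : δ ^ s ≤ v t ^ s := pow_le_pow_left₀ hδ0.le (hlow t ht) s
      have h1 : c * t⁻¹ ≤ (γ1/2) * (t ^ (-(m:ℝ)/(q:ℝ)) * v t ^ s) := by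
        rw [hcdef]
        have hδs : (0:ℝ) ≤ δ ^ s := by positivity
        have hP : (0:ℝ) ≤ t ^ (-(m:ℝ)/(q:ℝ)) := (rpow_pos_of_pos htpos _).le
        have : δ ^ s * t⁻¹ ≤ t ^ (-(m:ℝ)/(q:ℝ)) * v t ^ s := by
          calc δ ^ s * t⁻¹ ≤ v t ^ s * t ^ (-(m:ℝ)/(q:ℝ)) := by
                exact mul_le_mul hvs hinv (by positivity)
                  (pow_nonneg (le_trans hδ0.le (hlow t ht)) s)
            _ = t ^ (-(m:ℝ)/(q:ℝ)) * v t ^ s := by ring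
        nlinarith
      exact le_trans h1 (hfge t ht)
    -- integrate: w := v - c * log is monotone on [t1, T2]
    set T2 := t1 * Real.exp ((d0 + 1)/c) with hT2def
    have hexp1 : (1:ℝ) ≤ Real.exp ((d0 + 1)/c) := by
      rw [Real.one_le_exp_iff]
      positivity
    have ht1pos : (0:ℝ) < t1 := by linarith
    have hT2ge : t1 ≤ T2 := le_mul_of_one_le_right ht1pos.le hexp1
    have hwderiv : ∀ x ∈ Icc t1 T2, HasDerivAt (fun y => v y - c * Real.log y)
        (γ1 * x ^ (-(m:ℝ)/(q:ℝ)) * v x ^ s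
          + γ2 * x ^ (-(n:ℝ)/(q:ℝ)) * v x ^ d + ρ x - c * x⁻¹) x := by
      intro x hx
      have hx1 : (1:ℝ) ≤ x := le_trans ht11 hx.1
      exact (hdv x (le_trans ht1t0 hx.1)).sub
        ((Real.hasDerivAt_log (by linarith)).const_mul c)
    have hmono : MonotoneOn (fun y => v y - c * Real.log y) (Icc t1 T2) := by
      apply monotoneOn_of_deriv_nonneg (convex_Icc _ _)
      · intro x hx
        have hx1 : t1 ≤ x := hx.1
        exact ((hdv x (le_trans ht1t0 hx1)).sub
          ((Real.hasDerivAt_log (by nlinarith [le_trans ht11 hx1])).const_mul c)).continuousAt.continuousWithinAt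
      · intro x hx
        rw [interior_Icc] at hx
        exact ((hwderiv x ⟨hx.1.le, hx.2.le⟩).differentiableAt).differentiableWithinAt
      · intro x hx
        rw [interior_Icc] at hx
        rw [(hwderiv x ⟨hx.1.le, hx.2.le⟩).deriv]
        have := hgrow x hx.1.le
        linarith
    have hw := hmono (left_mem_Icc.2 hT2ge) (right_mem_Icc.2 hT2ge) hT2ge
    simp only at hw
    have hlog : Real.log T2 = Real.log t1 + (d0 + 1)/c := by
      rw [hT2def, Real.log_mul (ne_of_gt ht1pos) (ne_of_gt (Real.exp_pos _)),
        Real.log_exp]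
    have hvT2 : v T2 ≤ d0 := (hrange T2 (le_trans ht1t0 hT2ge)).2
    have : v t1 - c * Real.log t1 ≤ v T2 - c * Real.log T2 := hw
    rw [hlog] at this
    have hcc : c * ((d0 + 1)/c) = d0 + 1 := by field_simp
    linarith [hv1, hδ0, hvT2, hcc]
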